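/- Let f : X → Y be a function and (A_n) a decreasing sequence of subsets of X. Suppose B ⊆ f(A_0), B \ f(A_n) is finite for each n, and B ∩ (⋂_n f(A_n)) is countable. Then there exists D ⊆ A_0 such that D \ A_n is finite for each n and f(D) = B. -/

import Mathlib

/-- Lemma 4.1: lifting a pseudo-intersection through images. -/
theorem stmt1 {X Y : Type*} (f : X → Y) (A : ℕ → Set X)
    (hA : ∀ n, A (n + 1) ⊆ A n) (B : Set Y)
    (hB0 : B ⊆ f '' A 0) (hBn : ∀ n, (B \ f '' A n).Finite)
    (hcount : (B ∩ ⋂ n, f '' A n).Countable) :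
    ∃ D : Set X, D ⊆ A 0 ∧ (∀ n, (D \ A n).Finite) ∧ f '' D = B := by
  classical
  have hanti : Antitone A := antitone_nat_of_succ_le hA
  have himg : ∀ {m n : ℕ}, m ≤ n → f '' A n ⊆ f '' A m := by
    intro m n hmn
    exact Set.image_mono (hanti hmn)
  set core := B ∩ ⋂ n, f '' A n with hcoredef
  have hcoreB : core ⊆ B := Set.inter_subset_left
  have key : ∀ b ∈ B \ core, ∃ x, x ∈ A 0 ∧ f x = b ∧ ∀ n, x ∉ A n → b ∉ f '' A n := by
    intro b hb
    have hex : ∃ n, b ∉ f '' A n := by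
      by_contra h
      push_neg at h
      exact hb.2 ⟨hb.1, Set.mem_iInter.2 h⟩
    set N := Nat.find hex with hNdef
    have hN : b ∉ f '' A N := Nat.find_spec hex
    have hNpos : N ≠ 0 := by
      intro h0
      exact hN (h0 ▸ hB0 hb.1)
    have hmem : b ∈ f '' A (N - 1) := by
      by_contra h
      exact absurd (Nat.find_min' hex h) (by omega)
    obtain ⟨x, hxA, hfx⟩ := hmem
    refine ⟨x, hanti (Nat.zero_le _) hxA, hfx, ?_⟩
    intro n hxn hbn
    have hn : ¬ n ≤ N - 1 := fun h => hxn (hanti h hxA)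
    exact hN (himg (by omega) hbn)
  choose g hg0 hgf hgn using key
  set D2 : Set X := ⋃ (b : Y) (hb : b ∈ B \ core), {g b hb} with hD2def
  have hD2sub : D2 ⊆ A 0 := by
    intro x hx
    simp only [hD2def, Set.mem_iUnion, Set.mem_singleton_iff] at hx
    obtain ⟨b, hb, rfl⟩ := hx
    exact hg0 b hb
  have hD2img : f '' D2 = B \ core := by
    ext y
    constructor
    · rintro ⟨x, hx, rfl⟩
      simp only [hD2def, Set.mem_iUnion, Set.mem_singleton_iff] at hx
      obtain ⟨b, hb, rfl⟩ := hx
      rw [hgf b hb]; exact hb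
    · intro hy
      exact ⟨g y hy, by simp [hD2def]; exact ⟨y, hy, rfl⟩, hgf y hy⟩
  have hD2fin : ∀ n, (D2 \ A n).Finite := by
    intro n
    have hinj : Set.InjOn f (D2 \ A n) := by
      rintro x ⟨hx, _⟩ x' ⟨hx', _⟩ hxx'
      simp only [hD2def, Set.mem_iUnion, Set.mem_singleton_iff] at hx hx'
      obtain ⟨b, hb, rfl⟩ := hx
      obtain ⟨b', hb', rfl⟩ := hx'
      have : b = b' := by rw [← hgf b hb, ← hgf b' hb', hxx']
      subst this
      rfl
    have himgsub : f '' (D2 \ A n) ⊆ B \ f '' A n := by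
      rintro y ⟨x, ⟨hxD, hxn⟩, rfl⟩
      simp only [hD2def, Set.mem_iUnion, Set.mem_singleton_iff] at hxD
      obtain ⟨b, hb, rfl⟩ := hxD
      rw [hgf b hb]
      exact ⟨hb.1, hgn b hb n hxn⟩
    exact Set.Finite.of_finite_image ((hBn n).subset himgsub) hinj
  rcases core.eq_empty_or_nonempty with hce | hcne
  · refine ⟨D2, hD2sub, hD2fin, ?_⟩
    rw [hD2img, hce, Set.diff_empty]
  · obtain ⟨e, he⟩ := Set.Countable.exists_eq_range hcount hcne
    have hek : ∀ k, ∃ x, x ∈ A k ∧ f x = e k := by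
      intro k
      have : e k ∈ core := he ▸ Set.mem_range_self k
      have : e k ∈ f '' A k := (Set.mem_iInter.1 this.2) k
      exact this.imp fun x hx => ⟨hx.1, hx.2⟩
    choose x1 hx1A hx1f using hek
    refine ⟨D2 ∪ Set.range x1, ?_, ?_, ?_⟩
    · rintro x (hx | ⟨k, rfl⟩)
      · exact hD2sub hx
      · exact hanti (Nat.zero_le k) (hx1A k)
    · intro n
      have h1 : Set.range x1 \ A n ⊆ x1 '' (Set.Iio n) := by
        rintro x ⟨⟨k, rfl⟩, hxn⟩
        refine ⟨k, ?_, rfl⟩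
        by_contra h
        exact hxn (hanti (by simpa using h) (hx1A k))
      have : (D2 ∪ Set.range x1) \ A n ⊆ (D2 \ A n) ∪ (Set.range x1 \ A n) := by
        rintro x ⟨hx | hx, hxn⟩
        · exact Or.inl ⟨hx, hxn⟩
        · exact Or.inr ⟨hx, hxn⟩
      exact (((hD2fin n).union (((Set.finite_Iio n).image x1).subset h1))).subset this
    · rw [Set.image_union, hD2img]
      have : f '' Set.range x1 = core := by
        have hcomp : f ∘ x1 = e := funext hx1f
        rw [← Set.range_comp, hcomp, ← he]
      rw [this, Set.diff_union_of_subset hcoreB]
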